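/- Let $A$ and $B$ be integral domains such that the unit group of $A \times B$ has more than one element. Then the factroids of the ring $A \times B$ are exactly the sets $F \times G$, where $F$ is a factroid of $A$ and $G$ is a factroid of $B$. -/

import Mathlib

/-- A factroid of a commutative ring `R`: an additive subgroup `F` such that
`b * a ∈ F` with `b` a nonzerodivisor implies `a ∈ F`. -/
def IsFactroid {R : Type*} [CommRing R] (F : Set R) : Prop :=
  (0 : R) ∈ F ∧ (∀ x ∈ F, ∀ y ∈ F, x + y ∈ F) ∧ (∀ x ∈ F, -x ∈ F) ∧
    ∀ b ∈ nonZeroDivisors R, ∀ a : R, b * a ∈ F → a ∈ F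

section Aux
variable {A B : Type*} [CommRing A] [IsDomain A] [CommRing B] [IsDomain B]

lemma nzd_pair {a : A} {b : B} (ha : a ≠ 0) (hb : b ≠ 0) :
    (a, b) ∈ nonZeroDivisors (A × B) := by
  rw [mem_nonZeroDivisors_iff_right]
  rintro ⟨x, y⟩ hxy
  have h1 : x * a = 0 := congrArg Prod.fst hxy
  have h2 : y * b = 0 := congrArg Prod.snd hxy
  have hx : x = 0 := by exact (mul_eq_zero.mp h1).resolve_right ha
  have hy : y = 0 := by exact (mul_eq_zero.mp h2).resolve_right hb
  simp [hx, hy, Prod.ext_iff]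

-- from a unit ≠ 1 in B, project to second factor
lemma keyB (H : Set (A × B)) (hH : IsFactroid H) (v : Bˣ) (hv : (v : B) ≠ 1)
    (a : A) (b : B) (hab : (a, b) ∈ H) : (0, b) ∈ H := by
  obtain ⟨h0, hadd, hneg, hdiv⟩ := hH
  set w : B := ((v⁻¹ : Bˣ) : B) with hw
  have hw1 : w ≠ 1 := by
    intro h
    apply hv
    have := congrArg (fun x => (v : B) * x) h
    exact Eq.symm (show (1 : _) = _ by simpa [hw] using this)
  have h1 : (a, w * b) ∈ H := by
    apply hdiv (1, (v : B)) (nzd_pair one_ne_zero v.ne_zero)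
    have : ((1 : A), (v : B)) * (a, w * b) = (a, b) := by
      simp [Prod.ext_iff, hw, ← mul_assoc]
    rwa [this]
  have h2 : ((0 : A), b - w * b) ∈ H := by
    have := hadd _ hab _ (hneg _ h1)
    simpa [Prod.ext_iff, sub_eq_add_neg] using this
  have h3 : ((1 : A), 1 - w) * (0, b) = ((0 : A), b - w * b) := by
    simp [Prod.ext_iff]; ring
  exact hdiv (1, 1 - w) (nzd_pair one_ne_zero (sub_ne_zero.mpr (Ne.symm hw1))) _ (h3 ▸ h2)

lemma keyA (H : Set (A × B)) (hH : IsFactroid H) (u : Aˣ) (hu : (u : A) ≠ 1)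
    (a : A) (b : B) (hab : (a, b) ∈ H) : (a, 0) ∈ H := by
  obtain ⟨h0, hadd, hneg, hdiv⟩ := hH
  set w : A := ((u⁻¹ : Aˣ) : A) with hw
  have hw1 : w ≠ 1 := by
    intro h
    apply hu
    have := congrArg (fun x => (u : A) * x) h
    exact Eq.symm (show (1 : _) = _ by simpa [hw] using this)
  have h1 : (w * a, b) ∈ H := by
    apply hdiv ((u : A), 1) (nzd_pair u.ne_zero one_ne_zero)
    have : ((u : A), (1 : B)) * (w * a, b) = (a, b) := by
      simp [Prod.ext_iff, hw, ← mul_assoc]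
    rwa [this]
  have h2 : (a - w * a, (0 : B)) ∈ H := by
    have := hadd _ hab _ (hneg _ h1)
    simpa [Prod.ext_iff, sub_eq_add_neg] using this
  have h3 : ((1 - w : A), (1 : B)) * (a, 0) = ((a - w * a), (0 : B)) := by
    simp [Prod.ext_iff]; ring
  exact hdiv (1 - w, 1) (nzd_pair (sub_ne_zero.mpr (Ne.symm hw1)) one_ne_zero) _ (h3 ▸ h2)

lemma both_proj (H : Set (A × B)) (hH : IsFactroid H)
    (hunits : ∃ u : (A × B)ˣ, u ≠ 1)
    (a : A) (b : B) (hab : (a, b) ∈ H) : (a, 0) ∈ H ∧ (0, b) ∈ H := by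
  obtain ⟨u, hu⟩ := hunits
  have hne : (u : A × B) ≠ 1 := fun h => hu (Units.ext h)
  have hcases : (u : A × B).1 ≠ 1 ∨ (u : A × B).2 ≠ 1 := by
    by_contra h
    push_neg at h
    exact hne (Prod.ext h.1 h.2)
  -- unit in each component
  have hu1 : IsUnit (u : A × B).1 := ⟨Units.map (RingHom.fst A B).toMonoidHom u, rfl⟩
  have hu2 : IsUnit (u : A × B).2 := ⟨Units.map (RingHom.snd A B).toMonoidHom u, rfl⟩
  obtain ⟨u1, hu1e⟩ := hu1
  obtain ⟨u2, hu2e⟩ := hu2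
  rcases hcases with h | h
  · have h1 : (a, 0) ∈ H := keyA H hH u1 (hu1e ▸ h) a b hab
    have h2 : ((0 : A), b) ∈ H := by
      have := hH.2.1 _ hab _ (hH.2.2.1 _ h1)
      simpa using this
    exact ⟨h1, h2⟩
  · have h2 : ((0 : A), b) ∈ H := keyB H hH u2 (hu2e ▸ h) a b hab
    have h1 : (a, (0 : B)) ∈ H := by
      have := hH.2.1 _ hab _ (hH.2.2.1 _ h2)
      simpa using this
    exact ⟨h1, h2⟩

end Aux


/-- Let `A` and `B` be integral domains such that `A × B` has more than one unit.
Then the factroids of `A × B` are exactly the sets `F × G` with `F` a factroid of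
`A` and `G` a factroid of `B`. -/
theorem stmt_16 {A B : Type*} [CommRing A] [IsDomain A] [CommRing B] [IsDomain B]
    (hunits : ∃ u : (A × B)ˣ, u ≠ 1) :
    ∀ H : Set (A × B), IsFactroid H ↔
      ∃ (F : Set A) (G : Set B), IsFactroid F ∧ IsFactroid G ∧ H = F ×ˢ G := by
  intro H
  constructor
  · intro hH
    refine ⟨{a | (a, 0) ∈ H}, {b | ((0 : A), b) ∈ H}, ?_, ?_, ?_⟩
    · refine ⟨hH.1, ?_, ?_, ?_⟩
      · intro x hx y hy
        have := hH.2.1 _ hx _ hy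
        simpa using this
      · intro x hx
        have := hH.2.2.1 _ hx
        simpa using this
      · intro b hb a ha
        have hb0 : b ≠ 0 := nonZeroDivisors.ne_zero hb
        have : ((b : A), (1 : B)) * (a, 0) = (b * a, (0 : B)) := by simp
        exact hH.2.2.2 (b, 1) (nzd_pair hb0 one_ne_zero) (a, 0) (this ▸ ha)
    · refine ⟨hH.1, ?_, ?_, ?_⟩
      · intro x hx y hy
        have := hH.2.1 _ hx _ hy
        simpa using this
      · intro x hx
        have := hH.2.2.1 _ hx
        simpa using this
      · intro b hb a ha
        have hb0 : b ≠ 0 := nonZeroDivisors.ne_zero hb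
        have : ((1 : A), b) * ((0 : A), a) = ((0 : A), b * a) := by simp
        exact hH.2.2.2 (1, b) (nzd_pair one_ne_zero hb0) (0, a) (this ▸ ha)
    · ext ⟨a, b⟩
      simp only [Set.mem_prod, Set.mem_setOf_eq]
      constructor
      · intro hab
        exact both_proj H hH hunits a b hab
      · rintro ⟨h1, h2⟩
        have := hH.2.1 _ h1 _ h2
        simpa using this
  · rintro ⟨F, G, hF, hG, rfl⟩
    refine ⟨⟨hF.1, hG.1⟩, ?_, ?_, ?_⟩
    · rintro ⟨x1, x2⟩ ⟨hx1, hx2⟩ ⟨y1, y2⟩ ⟨hy1, hy2⟩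
      exact ⟨hF.2.1 _ hx1 _ hy1, hG.2.1 _ hx2 _ hy2⟩
    · rintro ⟨x1, x2⟩ ⟨hx1, hx2⟩
      exact ⟨hF.2.2.1 _ hx1, hG.2.2.1 _ hx2⟩
    · rintro ⟨b1, b2⟩ hb ⟨a1, a2⟩ ⟨ha1, ha2⟩
      have hb1 : b1 ∈ nonZeroDivisors A := by
        rw [mem_nonZeroDivisors_iff_right]
        intro x hx
        have : ((x : A), (0 : B)) * (b1, b2) = 0 := by simp [Prod.ext_iff, hx]
        have := mem_nonZeroDivisors_iff_right.mp hb _ this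
        exact congrArg Prod.fst this
      have hb2 : b2 ∈ nonZeroDivisors B := by
        rw [mem_nonZeroDivisors_iff_right]
        intro x hx
        have : ((0 : A), (x : B)) * (b1, b2) = 0 := by simp [Prod.ext_iff, hx]
        have := mem_nonZeroDivisors_iff_right.mp hb _ this
        exact congrArg Prod.snd this
      exact ⟨hF.2.2.2 b1 hb1 a1 ha1, hG.2.2.2 b2 hb2 a2 ha2⟩
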